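/- If the period τ is even, then Q_{τ/2 + jτ} divides 2N for every integer j ≥ 0; in particular Q_{τ/2} divides 2N. -/

import Mathlib

lemma stepCore (s : ℝ) (pm p1 qm q1 am n : ℤ)
    (hs : s^2 = (n:ℝ)) (hqm : (qm:ℝ) ≠ 0) (hq1 : (q1:ℝ) ≠ 0)
    (hP : p1 = am*qm - pm) (hQ : q1*qm = n - p1^2) :
    (((pm:ℝ)+s)/qm - am) * (((p1:ℝ)+s)/q1) = 1 := by
  have hP' : ((p1:ℝ)) = (am:ℝ)*qm - pm := by exact_mod_cast hP
  have hQ' : ((q1:ℝ))*qm = (n:ℝ) - (p1:ℝ)^2 := by exact_mod_cast hQ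
  have key : (((pm:ℝ))+s-(am:ℝ)*qm) * (((p1:ℝ))+s) = (qm:ℝ)*q1 := by
    linear_combination hs - hQ' + ((p1:ℝ)+s) * hP'
  calc (((pm:ℝ)+s)/qm - am) * (((p1:ℝ)+s)/q1)
      = ((((pm:ℝ))+s-(am:ℝ)*qm) * (((p1:ℝ))+s))/((qm:ℝ)*q1) := by
        rw [div_sub' hqm, div_mul_div_comm]; ring
    _ = ((qm:ℝ)*q1)/((qm:ℝ)*q1) := by rw [key]
    _ = 1 := div_self (mul_ne_zero hqm hq1)

lemma stepCore2 (s : ℝ) (pm p1 qm qm1 am n : ℤ)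
    (hs : s^2 = (n:ℝ)) (h1 : (qm:ℝ) ≠ 0) (h2 : (qm1:ℝ) ≠ 0)
    (hP : p1 = am*qm - pm) (hQ : qm*qm1 = n - pm^2) :
    (((p1:ℝ)+s)/qm - am) * (((pm:ℝ)+s)/qm1) = 1 := by
  have hP' : ((p1:ℝ)) = (am:ℝ)*qm - pm := by exact_mod_cast hP
  have hQ' : ((qm:ℝ))*qm1 = (n:ℝ) - (pm:ℝ)^2 := by exact_mod_cast hQ
  have key : (((p1:ℝ))+s-(am:ℝ)*qm) * (((pm:ℝ))+s) = (qm:ℝ)*qm1 := by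
    linear_combination hs - hQ' + ((pm:ℝ)+s) * hP'
  calc (((p1:ℝ)+s)/qm - am) * (((pm:ℝ)+s)/qm1)
      = ((((p1:ℝ))+s-(am:ℝ)*qm) * (((pm:ℝ))+s))/((qm:ℝ)*qm1) := by
        rw [div_sub' h1, div_mul_div_comm]; ring
    _ = ((qm:ℝ)*qm1)/((qm:ℝ)*qm1) := by rw [key]
    _ = 1 := div_self (mul_ne_zero h1 h2)

noncomputable def xiF (P Q : ℤ → ℤ) (s : ℝ) (m : ℤ) : ℝ := ((P m : ℝ) + s) / (Q m : ℝ)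
noncomputable def etF (P Q : ℤ → ℤ) (s : ℝ) (m : ℤ) : ℝ := ((P m : ℝ) - s) / (Q m : ℝ)
noncomputable def zeF (P Q : ℤ → ℤ) (s : ℝ) (m : ℤ) : ℝ := ((P m : ℝ) + s) / (Q (m-1) : ℝ)

lemma xiF_def (P Q : ℤ → ℤ) (s:ℝ) (m:ℤ) : xiF P Q s m = ((P m:ℝ)+s)/(Q m:ℝ) := rfl
lemma etF_def (P Q : ℤ → ℤ) (s:ℝ) (m:ℤ) : etF P Q s m = ((P m:ℝ)-s)/(Q m:ℝ) := rfl
lemma zeF_def (P Q : ℤ → ℤ) (s:ℝ) (m:ℤ) : zeF P Q s m = ((P m:ℝ)+s)/(Q (m-1):ℝ) := rfl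

set_option maxHeartbeats 1600000 in
theorem stmt_8
    (N : ℕ) (hN : 0 < N) (hNsq : ¬ IsSquare N)
    (a P Q : ℤ → ℤ)
    (hP0 : P 0 = 0) (hQ0 : Q 0 = 1)
    (ha : ∀ m : ℤ, 0 ≤ m → a m = ⌊((P m : ℝ) + Real.sqrt N) / (Q m : ℝ)⌋)
    (hPrec : ∀ m : ℤ, 0 ≤ m → P (m + 1) = a m * Q m - P m)
    (hQrec : ∀ m : ℤ, 0 ≤ m → Q (m + 1) * Q m = (N : ℤ) - P (m + 1) ^ 2)
    (τ : ℕ) (hτ : 0 < τ)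
    (hper : ∀ n : ℤ, 1 ≤ n → a (n + τ) = a n)
    (hmin : ∀ τ' : ℕ, 0 < τ' → (∀ n : ℤ, 1 ≤ n → a (n + τ') = a n) → τ ≤ τ')
    (hτeven : Even τ)
    :
    ∀ j : ℕ, Q (((τ / 2 : ℕ) : ℤ) + (j : ℤ) * (τ : ℤ)) ∣ 2 * (N : ℤ) := by
  have hτ1 : (1:ℤ) ≤ (τ:ℤ) := by exact_mod_cast hτ
  set s : ℝ := Real.sqrt N with hsdef
  have hs2 : s^2 = (N:ℝ) := by rw [hsdef]; exact Real.sq_sqrt (by positivity)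
  have hs2' : s^2 = (((N:ℤ)):ℝ) := by exact_mod_cast hs2
  have hirr : Irrational s := by rw [hsdef]; exact irrational_sqrt_natCast_iff.mpr hNsq
  have hN2 : 2 ≤ N := by
    rcases Nat.lt_or_ge N 2 with h | h
    · exfalso
      have h1 : N = 1 := by omega
      apply hNsq
      rw [h1]
      exact ⟨1, rfl⟩
    · exact h
  have hNR : (2:ℝ) ≤ (N:ℝ) := by exact_mod_cast hN2
  have hsnn : 0 ≤ s := by rw [hsdef]; exact Real.sqrt_nonneg _
  have hs1 : 1 < s := by nlinarith
  have hs0 : 0 < s := by linarith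
  -- Q never vanishes
  have hNP : ∀ p : ℤ, (N:ℤ) - p^2 ≠ 0 := by
    intro p h
    apply hNsq
    refine ⟨p.natAbs, ?_⟩
    have h' : (N:ℤ) = (p.natAbs:ℤ) * (p.natAbs:ℤ) := by
      rw [Int.natAbs_mul_self']; nlinarith [h]
    exact_mod_cast h'
  have hQne : ∀ m : ℤ, 0 ≤ m → Q m ≠ 0 := by
    refine Int.le_induction ?_ ?_
    · rw [hQ0]; norm_num
    · intro n hn ih h0
      have h1 := hQrec n hn
      rw [h0, zero_mul] at h1
      exact hNP (P (n+1)) h1.symm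
  have hQneR : ∀ m : ℤ, 0 ≤ m → ((Q m:ℝ)) ≠ 0 := fun m hm => Int.cast_ne_zero.mpr (hQne m hm)
  have ha' : ∀ m:ℤ, 0 ≤ m → a m = ⌊xiF P Q s m⌋ := fun m hm => ha m hm
  have hfl : ∀ m:ℤ, 0 ≤ m → ((a m:ℝ) < xiF P Q s m ∧ xiF P Q s m < (a m:ℝ) + 1) := by
    intro m hm
    have hI : Irrational (xiF P Q s m) := (hirr.intCast_add (P m)).div_intCast (hQne m hm)
    have hfloor : a m = ⌊xiF P Q s m⌋ := ha' m hm
    constructor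
    · rw [hfloor]
      exact lt_of_le_of_ne (Int.floor_le _) (fun h => (hI.ne_int _) h.symm)
    · rw [hfloor]
      exact Int.lt_floor_add_one _
  have hxistep : ∀ m:ℤ, 0 ≤ m → (xiF P Q s m - (a m:ℝ)) * xiF P Q s (m+1) = 1 := by
    intro m hm
    exact stepCore s (P m) (P (m+1)) (Q m) (Q (m+1)) (a m) (N:ℤ) hs2' (hQneR m hm)
      (hQneR (m+1) (by linarith)) (hPrec m hm) (hQrec m hm)
  have hetstep : ∀ m:ℤ, 0 ≤ m → (etF P Q s m - (a m:ℝ)) * etF P Q s (m+1) = 1 := by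
    intro m hm
    have h := stepCore (-s) (P m) (P (m+1)) (Q m) (Q (m+1)) (a m) (N:ℤ)
      (by rw [neg_pow]; simp [hs2']) (hQneR m hm) (hQneR (m+1) (by linarith))
      (hPrec m hm) (hQrec m hm)
    rw [etF_def, etF_def]
    calc (((P m:ℝ)-s)/(Q m:ℝ) - (a m:ℝ)) * (((P (m+1):ℝ)-s)/(Q (m+1):ℝ))
        = (((P m:ℝ)+(-s))/(Q m:ℝ) - (a m:ℝ)) * (((P (m+1):ℝ)+(-s))/(Q (m+1):ℝ)) := by ring
      _ = 1 := h
  have hstepInv : ∀ m:ℤ, 0 ≤ m → 0 < Q m → 1 ≤ a m → etF P Q s m - (a m:ℝ) < -1 →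
      (0 < Q (m+1) ∧ 0 < P (m+1) ∧ ((P (m+1):ℝ)) < s ∧ 1 < xiF P Q s (m+1) ∧
        -1 < etF P Q s (m+1) ∧ etF P Q s (m+1) < 0) := by
    intro m hm hQm ham heta
    have hx := hxistep m hm
    have he := hetstep m hm
    have hflm := hfl m hm
    have h0c : 0 < xiF P Q s m - (a m:ℝ) := by linarith [hflm.1]
    have hc1 : xiF P Q s m - (a m:ℝ) < 1 := by linarith [hflm.2]
    have hx1 : 1 < xiF P Q s (m+1) := by nlinarith [hx, h0c, hc1]
    have he0 : etF P Q s (m+1) < 0 := by nlinarith [he, heta]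
    have hem1 : -1 < etF P Q s (m+1) := by nlinarith [he, heta, he0]
    have hQm1ne := hQneR (m+1) (by linarith)
    have hdiff : xiF P Q s (m+1) - etF P Q s (m+1) = 2*s/((Q (m+1):ℝ)) := by
      rw [xiF_def, etF_def, div_sub_div_same]; ring_nf
    have hdpos : 0 < 2*s/((Q (m+1):ℝ)) := by rw [← hdiff]; linarith
    have hQR : (0:ℝ) < (Q (m+1):ℝ) := by
      rcases div_pos_iff.mp hdpos with ⟨_, h⟩ | ⟨h, _⟩
      · exact h
      · linarith
    have hQpos : 0 < Q (m+1) := by exact_mod_cast hQR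
    have hsum : xiF P Q s (m+1) + etF P Q s (m+1) = 2*((P (m+1):ℝ))/((Q (m+1):ℝ)) := by
      rw [xiF_def, etF_def, ← add_div]; ring_nf
    have hPpos : (0:ℝ) < (P (m+1):ℝ) := by
      have h1 : 0 < 2*((P (m+1):ℝ))/((Q (m+1):ℝ)) := by rw [← hsum]; linarith
      have h2 := mul_pos h1 hQR
      rw [div_mul_cancel₀ _ hQm1ne] at h2
      linarith
    have hPpos' : 0 < P (m+1) := by exact_mod_cast hPpos
    have hPlt : ((P (m+1):ℝ)) < s := by
      have h3 : ((P (m+1):ℝ) - s)/((Q (m+1):ℝ)) < 0 := he0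
      rcases div_neg_iff.mp h3 with ⟨_, h⟩ | ⟨h, _⟩
      · linarith
      · linarith
    exact ⟨hQpos, hPpos', hPlt, hx1, hem1, he0⟩
  have ha0 : a 0 = ⌊s⌋ := by
    have h := ha 0 le_rfl
    rw [hP0, hQ0] at h
    simpa using h
  have ha0ge : 1 ≤ a 0 := by
    rw [ha0]
    exact Int.le_floor.mpr (by exact_mod_cast hs1.le)
  have ha0R : (1:ℝ) ≤ (a 0:ℝ) := by exact_mod_cast ha0ge
  have hxi0 : xiF P Q s 0 = s := by rw [xiF_def, hP0, hQ0]; norm_num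
  have het0 : etF P Q s 0 = -s := by rw [etF_def, hP0, hQ0]; norm_num
  have hInv : ∀ m:ℤ, 1 ≤ m → (0 < Q m ∧ 0 < P m ∧ ((P m:ℝ)) < s ∧ 1 < xiF P Q s m ∧
      -1 < etF P Q s m ∧ etF P Q s m < 0) := by
    refine Int.le_induction ?_ ?_
    · have h := hstepInv 0 le_rfl (by rw [hQ0]; norm_num) ha0ge (by rw [het0]; linarith)
      norm_num at h ⊢
      exact h
    · intro m hm ih
      have hage : 1 ≤ a m := by
        rw [ha' m (by linarith)]
        exact Int.le_floor.mpr (by exact_mod_cast ih.2.2.2.1.le)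
      have hamR : (1:ℝ) ≤ (a m:ℝ) := by exact_mod_cast hage
      exact hstepInv m (by linarith) ih.1 hage (by linarith [ih.2.2.2.2.2])
  have haA : ∀ m:ℤ, 1 ≤ m → 1 ≤ a m := by
    intro m hm
    rw [ha' m (by linarith)]
    exact Int.le_floor.mpr (by exact_mod_cast (hInv m hm).2.2.2.1.le)
  have hP1 : P 1 = a 0 := by
    have h := hPrec 0 le_rfl
    rw [hP0, hQ0] at h
    simpa using h
  have hze1 : zeF P Q s 1 = (a 0:ℝ) + s := by
    have e : (1:ℤ)-1 = 0 := by ring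
    rw [zeF_def, e, hQ0, hP1]
    norm_num
  have hzstep : ∀ m:ℤ, 1 ≤ m → (zeF P Q s (m+1) - (a m:ℝ)) * zeF P Q s m = 1 := by
    intro m hm
    have hq : Q m * Q (m-1) = (N:ℤ) - (P m)^2 := by
      have h := hQrec (m-1) (by linarith)
      have e : m - 1 + 1 = m := by ring
      rw [e] at h
      exact h
    have h := stepCore2 s (P m) (P (m+1)) (Q m) (Q (m-1)) (a m) (N:ℤ) hs2'
      (hQneR m (by linarith)) (hQneR (m-1) (by linarith)) (hPrec m (by linarith)) hq
    have e1 : m+1-1 = m := by ring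
    rw [zeF_def, zeF_def, e1]
    exact h
  have hzpos : ∀ m:ℤ, 1 ≤ m → 1 < zeF P Q s m := by
    refine Int.le_induction ?_ ?_
    · rw [hze1]; linarith
    · intro m hm ih
      have h := hzstep m hm
      have haR : (1:ℝ) ≤ (a m:ℝ) := by exact_mod_cast haA m hm
      nlinarith [h, ih, haR]
  have hzfl : ∀ m:ℤ, 1 ≤ m → a m = ⌊zeF P Q s (m+1)⌋ := by
    intro m hm
    have h := hzstep m hm
    have hz := hzpos m hm
    have h1 : (a m:ℝ) < zeF P Q s (m+1) := by nlinarith [h, hz]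
    have h2 : zeF P Q s (m+1) < (a m:ℝ) + 1 := by nlinarith [h, hz]
    exact ((Int.floor_eq_iff).mpr ⟨h1.le, by push_cast; linarith⟩).symm
  -- bounds and pigeonhole
  have hsa0 : s < (a 0:ℝ) + 1 := by
    have h := (hfl 0 le_rfl).2
    rwa [hxi0] at h
  have hbP : ∀ m:ℤ, 1 ≤ m → 1 ≤ P m ∧ P m ≤ a 0 := by
    intro m hm
    obtain ⟨hQm, hPm, hPs, hxm, he1, he2⟩ := hInv m hm
    refine ⟨hPm, ?_⟩
    have h1 : ((P m:ℝ)) < (a 0:ℝ) + 1 := lt_trans hPs hsa0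
    have h2 : P m < a 0 + 1 := by exact_mod_cast h1
    exact Int.lt_add_one_iff.mp h2
  have hbQ : ∀ m:ℤ, 1 ≤ m → 1 ≤ Q m ∧ Q m ≤ 2*(a 0) := by
    intro m hm
    obtain ⟨hQm, hPm, hPs, hxm, he1, he2⟩ := hInv m hm
    have hQmR : (0:ℝ) < (Q m:ℝ) := by exact_mod_cast hQm
    rw [xiF_def] at hxm
    have h1 : ((Q m:ℝ)) < (P m:ℝ) + s := by
      rw [one_lt_div hQmR] at hxm
      exact hxm
    have h2 : ((P m:ℝ)) ≤ (a 0:ℝ) := by exact_mod_cast (hbP m hm).2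
    have h3 : ((Q m:ℝ)) < 2*(a 0:ℝ) + 1 := by linarith only [h1, h2, hsa0]
    have h4 : Q m < 2*(a 0) + 1 := by exact_mod_cast h3
    exact ⟨hQm, Int.lt_add_one_iff.mp h4⟩
  classical
  have hkey : ∃ r p0 : ℤ, 1 ≤ r ∧ 1 ≤ p0 ∧ P r = P (r + p0) ∧ Q r = Q (r + p0) := by
    set T : Finset (ℤ × ℤ) := Finset.Icc 1 (a 0) ×ˢ Finset.Icc 1 (2*(a 0)) with hT
    have hmaps : ∀ jn ∈ Finset.range (T.card + 1),
        (fun j : ℕ => (P (1 + (j:ℤ)), Q (1 + (j:ℤ)))) jn ∈ T := by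
      intro jn _
      have h1 : (1:ℤ) ≤ 1 + (jn:ℤ) := by
        have := Int.natCast_nonneg jn
        linarith
      simp only [hT, Finset.mem_product, Finset.mem_Icc]
      exact ⟨⟨(hbP _ h1).1, (hbP _ h1).2⟩, ⟨(hbQ _ h1).1, (hbQ _ h1).2⟩⟩
    obtain ⟨j1, hj1, j2, hj2, hjne, hjeq⟩ :=
      Finset.exists_ne_map_eq_of_card_lt_of_maps_to (by simpa using Nat.lt_succ_self T.card) hmaps
    rcases Nat.lt_or_ge j1 j2 with h | h
    · refine ⟨1 + (j1:ℤ), (j2:ℤ) - (j1:ℤ), ?_, ?_, ?_, ?_⟩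
      · have := Int.natCast_nonneg j1; linarith
      · have : (j1:ℤ) < (j2:ℤ) := by exact_mod_cast h
        linarith
      · have e : 1 + (j1:ℤ) + ((j2:ℤ) - (j1:ℤ)) = 1 + (j2:ℤ) := by ring
        rw [e]; exact congrArg Prod.fst hjeq
      · have e : 1 + (j1:ℤ) + ((j2:ℤ) - (j1:ℤ)) = 1 + (j2:ℤ) := by ring
        rw [e]; exact congrArg Prod.snd hjeq
    · have h' : j2 < j1 := by omega
      refine ⟨1 + (j2:ℤ), (j1:ℤ) - (j2:ℤ), ?_, ?_, ?_, ?_⟩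
      · have := Int.natCast_nonneg j2; linarith
      · have : (j2:ℤ) < (j1:ℤ) := by exact_mod_cast h'
        linarith
      · have e : 1 + (j2:ℤ) + ((j1:ℤ) - (j2:ℤ)) = 1 + (j1:ℤ) := by ring
        rw [e]; exact (congrArg Prod.fst hjeq).symm
      · have e : 1 + (j2:ℤ) + ((j1:ℤ) - (j2:ℤ)) = 1 + (j1:ℤ) := by ring
        rw [e]; exact (congrArg Prod.snd hjeq).symm
  obtain ⟨r, p0, hr1, hp1, hseedP, hseedQ⟩ := hkey
  have hback : ∀ m n:ℤ, 1 ≤ m → 1 ≤ n → P (m+1) = P (n+1) → Q (m+1) = Q (n+1) →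
      (a m = a n ∧ P m = P n ∧ Q m = Q n) := by
    have hzrep : ∀ k:ℤ, 1 ≤ k → zeF P Q s (k+1)
        = ((P (k+1):ℝ) + s) * (Q (k+1):ℝ) / ((N:ℝ) - (P (k+1):ℝ)^2) := by
      intro k hk
      have hq := hQrec k (by linarith)
      have hqR : ((Q (k+1):ℝ)) * (Q k:ℝ) = (N:ℝ) - ((P (k+1):ℝ))^2 := by exact_mod_cast hq
      have e : k+1-1 = k := by ring
      rw [zeF_def, e, ← hqR]
      rw [div_eq_div_iff (hQneR k (by linarith)) (mul_ne_zero (hQneR (k+1) (by linarith)) (hQneR k (by linarith)))]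
      ring
    intro m n hm hn hPe hQe
    have hzeq : zeF P Q s (m+1) = zeF P Q s (n+1) := by
      rw [hzrep m hm, hzrep n hn, hPe, hQe]
    have hae : a m = a n := by rw [hzfl m hm, hzfl n hn, hzeq]
    have hQmn : Q m = Q n := by
      have e1 := hQrec m (by linarith)
      have e2 := hQrec n (by linarith)
      rw [← hPe, ← hQe] at e2
      exact mul_left_cancel₀ (hQne (m+1) (by linarith)) (e1.trans e2.symm)
    have hPmn : P m = P n := by
      have f1 := hPrec m (by linarith)
      have f2 := hPrec n (by linarith)
      rw [← hae, ← hQmn, ← hPe] at f2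
      linarith [f1, f2]
    exact ⟨hae, hPmn, hQmn⟩
  have hdown : ∀ t:ℤ, t ≤ r → 1 ≤ t → P t = P (t + p0) ∧ Q t = Q (t + p0) := by
    refine Int.le_induction_down (fun _ => ⟨hseedP, hseedQ⟩) ?_
    intro n hn ih h1
    have hn1 : 1 ≤ n := by linarith
    obtain ⟨hpe, hqe⟩ := ih hn1
    have e1 : n-1+1 = n := by ring
    have e2 : (n-1+p0)+1 = n+p0 := by ring
    have hb := hback (n-1) (n-1+p0) h1 (by linarith) (by rw [e1, e2]; exact hpe)
      (by rw [e1, e2]; exact hqe)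
    exact ⟨hb.2.1, hb.2.2⟩
  have hone := hdown 1 hr1 le_rfl
  have hfwd : ∀ m n:ℤ, 1 ≤ m → 1 ≤ n → P m = P n → Q m = Q n →
      P (m+1) = P (n+1) ∧ Q (m+1) = Q (n+1) := by
    intro m n hm hn hPe hQe
    have hae : a m = a n := by
      rw [ha' m (by linarith), ha' n (by linarith), xiF_def, xiF_def, hPe, hQe]
    have f1 := hPrec m (by linarith)
    have f2 := hPrec n (by linarith)
    have hPe1 : P (m+1) = P (n+1) := by rw [f1, f2, hae, hPe, hQe]
    have e1 := hQrec m (by linarith)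
    have e2 := hQrec n (by linarith)
    rw [← hPe1, ← hQe] at e2
    exact ⟨hPe1, mul_right_cancel₀ (hQne m (by linarith)) (e1.trans e2.symm)⟩
  have hperP : ∀ n:ℤ, 1 ≤ n → P n = P (n + p0) ∧ Q n = Q (n + p0) := by
    refine Int.le_induction hone ?_
    intro m hm ih
    have h := hfwd m (m + p0) hm (by linarith) ih.1 ih.2
    have e : m + p0 + 1 = m + 1 + p0 := by ring
    rw [e] at h
    exact h
  have hquad : ∀ n:ℤ, 1 ≤ n → ∀ k:ℤ, 1 ≤ k → ∃ A B C D : ℤ,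
      1 ≤ A ∧ 0 ≤ B ∧ 1 ≤ C ∧ 0 ≤ D ∧
      xiF P Q s n * ((C:ℝ) * xiF P Q s (n+k) + (D:ℝ)) = (A:ℝ) * xiF P Q s (n+k) + (B:ℝ) ∧
      xiF P Q s (n+(τ:ℤ)) * ((C:ℝ) * xiF P Q s (n+(τ:ℤ)+k) + (D:ℝ))
        = (A:ℝ) * xiF P Q s (n+(τ:ℤ)+k) + (B:ℝ) := by
    intro n hn
    refine Int.le_induction ?_ ?_
    · refine ⟨a n, 1, 1, 0, haA n hn, by norm_num, by norm_num, by norm_num, ?_, ?_⟩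
      · have h := hxistep n (by linarith)
        push_cast
        linear_combination h
      · have h := hxistep (n+(τ:ℤ)) (by linarith)
        rw [hper n hn] at h
        push_cast
        linear_combination h
    · intro k hk ih
      obtain ⟨A, B, C, D, hA, hB, hC, hD, h1, h2⟩ := ih
      have hnk : (1:ℤ) ≤ n + k := by linarith
      have hα := haA (n+k) hnk
      have hS1 := hxistep (n+k) (by linarith)
      have hS2 := hxistep ((n+k)+(τ:ℤ)) (by linarith)
      rw [hper (n+k) hnk] at hS2
      refine ⟨A*(a (n+k)) + B, A, C*(a (n+k)) + D, C, by nlinarith, by linarith,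
        by nlinarith, by linarith, ?_, ?_⟩
      · have e1 : n+(k+1) = (n+k)+1 := by ring
        rw [e1]
        push_cast
        linear_combination (xiF P Q s ((n+k)+1)) * h1 + ((A:ℝ) - (C:ℝ) * xiF P Q s n) * hS1
      · have e2 : n+(τ:ℤ)+k = (n+k)+(τ:ℤ) := by ring
        rw [e2] at h2
        have e3 : n+(τ:ℤ)+(k+1) = ((n+k)+(τ:ℤ))+1 := by ring
        rw [e3]
        push_cast
        linear_combination (xiF P Q s (((n+k)+(τ:ℤ))+1)) * h2
          + ((A:ℝ) - (C:ℝ) * xiF P Q s (n+(τ:ℤ))) * hS2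
  have hxiper : ∀ n:ℤ, 1 ≤ n → xiF P Q s (n+(τ:ℤ)) = xiF P Q s n := by
    intro n hn
    obtain ⟨A, B, C, D, hA, hB, hC, hD, h1, h2⟩ := hquad n hn p0 hp1
    have hx1 : xiF P Q s (n+p0) = xiF P Q s n := by
      rw [xiF_def, xiF_def, ← (hperP n hn).1, ← (hperP n hn).2]
    have hx2 : xiF P Q s (n+(τ:ℤ)+p0) = xiF P Q s (n+(τ:ℤ)) := by
      have h := hperP (n+(τ:ℤ)) (by linarith)
      rw [xiF_def, xiF_def, ← h.1, ← h.2]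
    rw [hx1] at h1
    rw [hx2] at h2
    by_contra hne
    have hIx := (hInv n hn).2.2.2.1
    have hIy := (hInv (n+(τ:ℤ)) (by linarith)).2.2.2.1
    have hfac : (xiF P Q s (n+(τ:ℤ)) - xiF P Q s n) *
        ((C:ℝ)*(xiF P Q s n + xiF P Q s (n+(τ:ℤ))) + ((D:ℝ) - (A:ℝ))) = 0 := by
      linear_combination h2 - h1
    have hyx : xiF P Q s (n+(τ:ℤ)) - xiF P Q s n ≠ 0 := sub_ne_zero.mpr hne
    have h3 : (C:ℝ)*(xiF P Q s n + xiF P Q s (n+(τ:ℤ))) + ((D:ℝ) - (A:ℝ)) = 0 := by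
      rcases mul_eq_zero.mp hfac with h | h
      · exact absurd h hyx
      · exact h
    have h4 : (C:ℝ) * xiF P Q s n * xiF P Q s (n+(τ:ℤ)) + (B:ℝ) = 0 := by
      linear_combination (xiF P Q s n) * h3 - h1
    have hCR : (1:ℝ) ≤ (C:ℝ) := by exact_mod_cast hC
    have hBR : (0:ℝ) ≤ (B:ℝ) := by exact_mod_cast hB
    have hxy : 1 < xiF P Q s n * xiF P Q s (n+(τ:ℤ)) := by nlinarith [hIx, hIy]
    nlinarith [h4, hxy, hCR, hBR]
  have hPQt : ∀ n:ℤ, 1 ≤ n → P (n+(τ:ℤ)) = P n ∧ Q (n+(τ:ℤ)) = Q n := by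
    intro n hn
    have hx := hxiper n hn
    have hQaR := hQneR n (by linarith)
    have hQbR := hQneR (n+(τ:ℤ)) (by linarith)
    rw [xiF_def, xiF_def] at hx
    have hcross := (div_eq_div_iff hQbR hQaR).mp hx
    have hQeq : Q (n+(τ:ℤ)) = Q n := by
      by_contra hne
      have hdenR : ((Q n):ℝ) - ((Q (n+(τ:ℤ))):ℝ) ≠ 0 :=
        sub_ne_zero.mpr (fun h => hne (by exact_mod_cast h.symm))
      apply hirr
      refine ⟨((P n * Q (n+(τ:ℤ)) - P (n+(τ:ℤ)) * Q n : ℤ):ℚ)/((Q n - Q (n+(τ:ℤ)) : ℤ):ℚ), ?_⟩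
      push_cast
      rw [div_eq_iff hdenR]
      linear_combination -hcross
    have hPeq : P (n+(τ:ℤ)) = P n := by
      rw [hQeq] at hcross
      have h5 := mul_right_cancel₀ hQaR hcross
      have h6 : ((P (n+(τ:ℤ))):ℝ) = (P n:ℝ) := by linarith
      exact_mod_cast h6
    exact ⟨hPeq, hQeq⟩
  -- Q τ = 1 and a τ = 2 * a 0
  have hpq1 := hPQt 1 le_rfl
  have hx0 := hxistep 0 le_rfl
  have hxτ := hxistep (τ:ℤ) (by linarith)
  have hxieq : xiF P Q s ((τ:ℤ)+1) = xiF P Q s 1 := by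
    have e : (τ:ℤ)+1 = 1+(τ:ℤ) := by ring
    rw [e, xiF_def, xiF_def, hpq1.1, hpq1.2]
  rw [hxieq] at hxτ
  have hx1ne : xiF P Q s 1 ≠ 0 := by
    have h := (hInv 1 le_rfl).2.2.2.1
    intro h0
    rw [h0] at h
    linarith
  have hceq : xiF P Q s (τ:ℤ) - ((a (τ:ℤ)):ℝ) = xiF P Q s 0 - ((a 0):ℝ) :=
    mul_right_cancel₀ hx1ne (hxτ.trans hx0.symm)
  rw [hxi0, xiF_def] at hceq
  have hQτne := hQneR (τ:ℤ) (by linarith)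
  have hceq' : (((P (τ:ℤ)):ℝ) + s) / ((Q (τ:ℤ)):ℝ) = s - ((a 0):ℝ) + ((a (τ:ℤ)):ℝ) := by
    linarith [hceq]
  have h5 := (div_eq_iff hQτne).mp hceq'
  have hQτ1 : Q (τ:ℤ) = 1 := by
    by_contra hne
    have hdenR : ((Q (τ:ℤ)):ℝ) - 1 ≠ 0 := by
      intro h
      apply hne
      have : ((Q (τ:ℤ)):ℝ) = 1 := by linarith
      exact_mod_cast this
    apply hirr
    refine ⟨((P (τ:ℤ) - a (τ:ℤ) * Q (τ:ℤ) + a 0 * Q (τ:ℤ) : ℤ):ℚ)/((Q (τ:ℤ) - 1 : ℤ):ℚ), ?_⟩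
    push_cast
    rw [div_eq_iff hdenR]
    linear_combination h5
  have hzeτ1 : zeF P Q s ((τ:ℤ)+1) = (a 0:ℝ) + s := by
    have e2 : (τ:ℤ)+1-1 = (τ:ℤ) := by ring
    rw [zeF_def, e2, hQτ1]
    have e3 : (τ:ℤ)+1 = 1+(τ:ℤ) := by ring
    rw [e3, hpq1.1, hP1]
    norm_num
  have haτ : a (τ:ℤ) = 2*(a 0) := by
    rw [hzfl (τ:ℤ) hτ1, hzeτ1, add_comm ((a 0:ℝ)) s, Int.floor_add_intCast, ← ha0]
    ring
  -- the symmetry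
  have hsym : ∀ k:ℤ, 1 ≤ k → k ≤ (τ:ℤ) → xiF P Q s k = zeF P Q s ((τ:ℤ)+1-k) := by
    refine Int.le_induction ?_ ?_
    · intro _
      have e : (τ:ℤ)+1-1 = (τ:ℤ) := by ring
      rw [e]
      have hz := hzstep (τ:ℤ) hτ1
      rw [hzeτ1, haτ] at hz
      have hz' : (s - ((a 0):ℝ)) * zeF P Q s (τ:ℤ) = 1 := by
        push_cast at hz
        linear_combination hz
      have hx : (s - ((a 0):ℝ)) * xiF P Q s 1 = 1 := by
        have h := hx0
        rw [hxi0] at h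
        norm_num at h
        linear_combination h
      have hcne : s - (a 0:ℝ) ≠ 0 := by
        have h := (hfl 0 le_rfl).1
        rw [hxi0] at h
        intro h0
        linarith
      exact mul_left_cancel₀ hcne (hx.trans hz'.symm)
    · intro k hk ih hk1
      have ihe := ih (by linarith)
      have htk1 : (1:ℤ) ≤ (τ:ℤ) - k := by linarith
      have hafk : a k = a ((τ:ℤ)-k) := by
        rw [ha' k (by linarith), hzfl ((τ:ℤ)-k) htk1]
        have e : (τ:ℤ)-k+1 = (τ:ℤ)+1-k := by ring
        rw [e, ← ihe]
      have hx := hxistep k (by linarith)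
      have hz := hzstep ((τ:ℤ)-k) htk1
      have e : (τ:ℤ)-k+1 = (τ:ℤ)+1-k := by ring
      rw [e] at hz
      rw [ihe, hafk] at hx
      have hcne : zeF P Q s ((τ:ℤ)+1-k) - ((a ((τ:ℤ)-k)):ℝ) ≠ 0 := by
        intro h0
        rw [h0, zero_mul] at hz
        norm_num at hz
      have hfin := mul_left_cancel₀ hcne (hx.trans hz.symm)
      have e2 : (τ:ℤ)+1-(k+1) = (τ:ℤ)-k := by ring
      rw [e2]
      exact hfin
  -- endgame
  obtain ⟨t, htt⟩ := hτeven
  have hth : τ/2 = t := by omega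
  have ht0 : 0 < t := by omega
  have ht1 : (1:ℤ) ≤ (t:ℤ) := by exact_mod_cast ht0
  have htτ : (τ:ℤ) = 2*(t:ℤ) := by
    have : ((τ:ℕ):ℤ) = ((t+t:ℕ):ℤ) := by exact_mod_cast congrArg (Nat.cast : ℕ → ℤ) htt
    push_cast at this
    linarith
  have hsymh := hsym (t:ℤ) ht1 (by rw [htτ]; linarith)
  have e : (τ:ℤ)+1-(t:ℤ) = (t:ℤ)+1 := by rw [htτ]; ring
  rw [e, xiF_def, zeF_def] at hsymh
  have e2 : (t:ℤ)+1-1 = (t:ℤ) := by ring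
  rw [e2] at hsymh
  have hQtne := hQneR (t:ℤ) (by linarith)
  have hPP : P ((t:ℤ)+1) = P (t:ℤ) := by
    have h7 := mul_right_cancel₀ hQtne ((div_eq_div_iff hQtne hQtne).mp hsymh)
    have h8 : ((P ((t:ℤ)+1)):ℝ) = ((P (t:ℤ)):ℝ) := by linarith
    exact_mod_cast h8
  have h2P : 2 * P (t:ℤ) = a (t:ℤ) * Q (t:ℤ) := by
    have h := hPrec (t:ℤ) (by linarith)
    rw [hPP] at h
    linarith
  have e1 := hQrec (t:ℤ) (by linarith)
  rw [hPP] at e1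
  have hdvd : Q (t:ℤ) ∣ 2*(N:ℤ) := by
    refine ⟨2*Q ((t:ℤ)+1) + a (t:ℤ) * P (t:ℤ), ?_⟩
    linear_combination (-2)*e1 + (P (t:ℤ))*h2P
  have hQj : ∀ j:ℕ, Q ((t:ℤ) + (j:ℤ)*(τ:ℤ)) = Q (t:ℤ) := by
    intro j
    induction j with
    | zero => norm_num
    | succ i ihq =>
      have e4 : (t:ℤ) + ((i+1:ℕ):ℤ)*(τ:ℤ) = ((t:ℤ) + (i:ℤ)*(τ:ℤ)) + (τ:ℤ) := by push_cast; ring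
      have hge : (1:ℤ) ≤ (t:ℤ) + (i:ℤ)*(τ:ℤ) := by
        have h9 : (0:ℤ) ≤ (i:ℤ)*(τ:ℤ) := mul_nonneg (Int.natCast_nonneg i) (by linarith)
        linarith
      rw [e4]
      have h10 := (hPQt ((t:ℤ) + (i:ℤ)*(τ:ℤ)) hge).2
      rw [h10, ihq]
  intro j
  rw [hth, hQj j]
  exact hdvd
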